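/- Boundedness of ρ in the Strategy-3 limit via coercivity: suppose (1 + Δt c_s σ_a) ρ = κ ⟨v²⟩ D_h^+ D_h^- ρ + F with κ = (Δt c_s)²/(ε² + Δt c_s(σ_s + ε²σ_a)) > 0, where D_h^+ = −(D_h^-)^T (periodic boundary conditions). Then (1 + Δt c_s σ_a)‖ρ‖² + κ⟨v²⟩‖D_h^- ρ‖² = (F, ρ), and consequently ‖ρ‖ ≤ ‖F‖/(1 + Δt c_s σ_a). -/
import Mathlib


open RealInnerProductSpace

/-- Coercivity bound for the Strategy-3 limit: if
`(1 + Δt c σ_a) ρ = κ⟨v²⟩ 𝒟_h^+ 𝒟_h^- ρ + F` with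
`κ = (Δt c)²/(ε² + Δt c(σ_s + ε²σ_a))` and `𝒟_h^+ = −(𝒟_h^-)ᵀ`, then
`(1 + Δt c σ_a)‖ρ‖² + κ⟨v²⟩‖𝒟_h^- ρ‖² = (F, ρ)` and `‖ρ‖ ≤ ‖F‖/(1 + Δt c σ_a)`. -/
theorem stmt_17 {U : Type*} [NormedAddCommGroup U] [InnerProductSpace ℝ U]
    (Dm Dp : U →ₗ[ℝ] U)
    (hadj : ∀ u w : U, ⟪Dp u, w⟫ = -⟪u, Dm w⟫)
    (ε Δt c σs σa v2 κ : ℝ)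
    (hε : 0 < ε) (hΔt : 0 < Δt) (hc : 0 < c) (hσs : 0 < σs) (hσa : 0 ≤ σa) (hv2 : 0 < v2)
    (hκ : κ = (Δt * c) ^ 2 / (ε ^ 2 + Δt * c * (σs + ε ^ 2 * σa)))
    (ρ F : U)
    (heq : (1 + Δt * c * σa) • ρ = (κ * v2) • Dp (Dm ρ) + F) :
    ((1 + Δt * c * σa) * ‖ρ‖ ^ 2 + κ * v2 * ‖Dm ρ‖ ^ 2 = ⟪F, ρ⟫) ∧
    ‖ρ‖ ≤ ‖F‖ / (1 + Δt * c * σa) := by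
  have ha : (0:ℝ) < 1 + Δt * c * σa := by positivity
  have hκ0 : 0 ≤ κ := by
    rw [hκ]
    positivity
  have key : (1 + Δt * c * σa) * ‖ρ‖ ^ 2 + κ * v2 * ‖Dm ρ‖ ^ 2 = ⟪F, ρ⟫ := by
    have h1 : ⟪(1 + Δt * c * σa) • ρ, ρ⟫ = ⟪(κ * v2) • Dp (Dm ρ) + F, ρ⟫ := by
      rw [heq]
    rw [inner_add_left, real_inner_smul_left, real_inner_smul_left,
      hadj (Dm ρ) ρ, real_inner_self_eq_norm_sq, real_inner_self_eq_norm_sq] at h1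
    nlinarith [h1]
  refine ⟨key, ?_⟩
  have hbound : (1 + Δt * c * σa) * ‖ρ‖ ^ 2 ≤ ‖F‖ * ‖ρ‖ := by
    have h2 : ⟪F, ρ⟫ ≤ ‖F‖ * ‖ρ‖ := real_inner_le_norm F ρ
    nlinarith [sq_nonneg ‖Dm ρ‖, hv2.le, mul_nonneg hκ0 hv2.le,
      mul_nonneg (mul_nonneg hκ0 hv2.le) (sq_nonneg ‖Dm ρ‖)]
  rw [le_div_iff₀ ha]
  rcases eq_or_lt_of_le (norm_nonneg ρ) with h | h
  · rw [← h, zero_mul]; exact norm_nonneg F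
  · nlinarith [hbound]
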